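/- arXiv:1105.3397 — 3 statements merged into one kernel-verified Lean document; each statement's English description precedes it below -/
import Mathlib

section
/- Let a : ℤ → ℝ with a_n ≠ 0 for all n, let b : ℤ → ℝ, and let λ ∈ ℝ. Let f, g : ℤ → ℂ be solutions of the Jacobi equation a_{n−1} y_{n−1} + a_n y_{n+1} + b_n y_n = λ y_n (n ∈ ℤ); then the componentwise conjugates f̄, ḡ are also solutions. If {g, ḡ} ≠ 0 and {f, f̄} = −{g, ḡ}, then |{g,f}|² = |{g, ḡ}|² + |{f, ḡ}|². -/
/-- `y` solves the Jacobi equation `a_{n-1} y_{n-1} + a_n y_{n+1} + b_n y_n = λ y_n` on `ℤ`. -/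
def JacobiSol (a b : ℤ → ℂ) (lam : ℂ) (y : ℤ → ℂ) : Prop :=
  ∀ n : ℤ, a (n - 1) * y (n - 1) + a n * y (n + 1) + b n * y n = lam * y n

/-- The Wronskian `{f,g}_n = a_n (f_n g_{n+1} - f_{n+1} g_n)`. -/
def Wron (a : ℤ → ℂ) (f g : ℤ → ℂ) (n : ℤ) : ℂ :=
  a n * (f n * g (n + 1) - f (n + 1) * g n)

/-- For a real Jacobi equation the componentwise conjugates of solutions are solutions,
and the unitarity identity `|{g,f}|² = |{g,ḡ}|² + |{f,ḡ}|²` holds whenever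
`{g,ḡ} ≠ 0` and `{f,f̄} = -{g,ḡ}`. -/
theorem wronskian_unitarity (a : ℤ → ℝ) (ha : ∀ n : ℤ, a n ≠ 0) (b : ℤ → ℝ) (lam : ℝ)
    (f g : ℤ → ℂ)
    (hf : JacobiSol (fun n => (a n : ℂ)) (fun n => (b n : ℂ)) (lam : ℂ) f)
    (hg : JacobiSol (fun n => (a n : ℂ)) (fun n => (b n : ℂ)) (lam : ℂ) g) :
    JacobiSol (fun n => (a n : ℂ)) (fun n => (b n : ℂ)) (lam : ℂ)
      (fun n => (starRingEnd ℂ) (f n)) ∧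
    JacobiSol (fun n => (a n : ℂ)) (fun n => (b n : ℂ)) (lam : ℂ)
      (fun n => (starRingEnd ℂ) (g n)) ∧
    (Wron (fun n => (a n : ℂ)) g (fun n => (starRingEnd ℂ) (g n)) 0 ≠ 0 →
     Wron (fun n => (a n : ℂ)) f (fun n => (starRingEnd ℂ) (f n)) 0
       = -Wron (fun n => (a n : ℂ)) g (fun n => (starRingEnd ℂ) (g n)) 0 →
     ‖Wron (fun n => (a n : ℂ)) g f 0‖ ^ 2
       = ‖Wron (fun n => (a n : ℂ)) g (fun n => (starRingEnd ℂ) (g n)) 0‖ ^ 2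
         + ‖Wron (fun n => (a n : ℂ)) f (fun n => (starRingEnd ℂ) (g n)) 0‖ ^ 2) := by
  constructor
  · intro n
    have h := congrArg (starRingEnd ℂ) (hf n)
    simpa [map_add, map_mul, Complex.conj_ofReal] using h
  constructor
  · intro n
    have h := congrArg (starRingEnd ℂ) (hg n)
    simpa [map_add, map_mul, Complex.conj_ofReal] using h
  intro hU0 hV
  set c := starRingEnd ℂ
  set X := Wron (fun n => (a n : ℂ)) g f 0 with hX
  set U := Wron (fun n => (a n : ℂ)) g (fun n => c (g n)) 0 with hUdef
  set Y := Wron (fun n => (a n : ℂ)) f (fun n => c (g n)) 0 with hY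
  set V := Wron (fun n => (a n : ℂ)) f (fun n => c (f n)) 0 with hVdef
  have hcU : c U = -U := by
    simp only [hUdef, Wron, c, map_mul, map_sub, Complex.conj_conj, Complex.conj_ofReal]
    ring
  have key : X * c X - Y * c Y = U * V := by
    simp only [hX, hUdef, hY, hVdef, Wron, c, map_mul, map_sub, Complex.conj_conj,
      Complex.conj_ofReal]
    ring
  have main : X * c X = U * c U + Y * c Y := by
    rw [hcU]
    linear_combination key + U * hV
  have habs : ∀ z : ℂ, ((‖z‖ ^ 2 : ℝ) : ℂ) = z * c z := by
    intro z
    rw [Complex.sq_norm]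
    exact (Complex.mul_conj z).symm
  have : ((‖X‖ ^ 2 : ℝ) : ℂ) = ((‖U‖ ^ 2 + ‖Y‖ ^ 2 : ℝ) : ℂ) := by
    rw [Complex.ofReal_add, habs X, habs U, habs Y]
    exact main
  exact_mod_cast this
end

section
/- Let λ ∈ ℂ with φ_q(λ) ≠ 0, let ω ∈ ℂ satisfy ω² = 1 − Δ(λ)², set m_± = (ϕ(λ) ± iω)/φ_q(λ), f⁺_j = θ⁺_j(λ) + m₊ φ⁺_j(λ) for j = 0, 1, and w = a_0 f⁺_1 + (v_0 − a⁰_0 m₋) f⁺_0. Then (φ_q(λ)/a⁰_0) · w = 2iω (1 + A(λ)) − J(λ). -/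
lemma wron_succ (a b : ℤ → ℂ) (lam : ℂ) (f g : ℤ → ℂ)
    (hf : JacobiSol a b lam f) (hg : JacobiSol a b lam g) (n : ℤ) :
    Wron a f g (n + 1) = Wron a f g n := by
  have h1 := hf (n + 1)
  have h2 := hg (n + 1)
  simp only [add_sub_cancel_right] at h1 h2
  simp only [Wron]
  linear_combination f (n + 1) * h2 - g (n + 1) * h1

lemma wron_nat (a b : ℤ → ℂ) (lam : ℂ) (f g : ℤ → ℂ)
    (hf : JacobiSol a b lam f) (hg : JacobiSol a b lam g) (k : ℕ) :
    Wron a f g (k : ℤ) = Wron a f g 0 := by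
  induction k with
  | zero => rfl
  | succ n ih => push_cast; rw [wron_succ a b lam f g hf hg]; exact_mod_cast ih

/-- The representation `ŵ = (φ_q/a⁰_0) w = 2iω(1+A) − J`. -/
theorem w_hat_representation
    (q : ℕ) (hq : 2 ≤ q) (a0 b0 : ℤ → ℝ)
    (hpa : ∀ n : ℤ, a0 (n + (q : ℤ)) = a0 n) (hpb : ∀ n : ℤ, b0 (n + (q : ℤ)) = b0 n)
    (ha0 : ∀ n : ℤ, 0 < a0 n) (hprod : ∏ j ∈ Finset.Icc (1 : ℤ) (q : ℤ), a0 j = 1)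
    (θ φ : ℂ → ℤ → ℂ)
    (hθ : ∀ lam : ℂ, JacobiSol (fun n => (a0 n : ℂ)) (fun n => (b0 n : ℂ)) lam (θ lam))
    (hθ0 : ∀ lam : ℂ, θ lam 0 = 1) (hθ1 : ∀ lam : ℂ, θ lam 1 = 0)
    (hφ : ∀ lam : ℂ, JacobiSol (fun n => (a0 n : ℂ)) (fun n => (b0 n : ℂ)) lam (φ lam))
    (hφ0 : ∀ lam : ℂ, φ lam 0 = 0) (hφ1 : ∀ lam : ℂ, φ lam 1 = 1)
    (p : ℕ) (hp : 1 ≤ p) (u v : ℤ → ℝ)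
    (hsupp : ∀ n : ℤ, (n < 0 ∨ (p : ℤ) < n) → u n = 0 ∧ v n = 0)
    (hapos : ∀ n : ℤ, 0 < a0 n + u n)
    (Θp Φp : ℂ → ℤ → ℂ)
    (hΘp : ∀ lam : ℂ, JacobiSol (fun n => ((a0 n + u n : ℝ) : ℂ))
      (fun n => ((b0 n + v n : ℝ) : ℂ)) lam (Θp lam))
    (hΘpb : ∀ lam : ℂ, ∀ n : ℤ, (p : ℤ) + 1 ≤ n → Θp lam n = θ lam n)
    (hΦp : ∀ lam : ℂ, JacobiSol (fun n => ((a0 n + u n : ℝ) : ℂ))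
      (fun n => ((b0 n + v n : ℝ) : ℂ)) lam (Φp lam))
    (hΦpb : ∀ lam : ℂ, ∀ n : ℤ, (p : ℤ) + 1 ≤ n → Φp lam n = φ lam n)
    (lam : ℂ) (hφq : φ lam (q : ℤ) ≠ 0) (ω : ℂ)
    (hω : ω ^ 2 = 1 - ((φ lam ((q : ℤ) + 1) + θ lam (q : ℤ)) / 2) ^ 2)
    (mp mm : ℂ)
    (hmp : mp = ((φ lam ((q : ℤ) + 1) - θ lam (q : ℤ)) / 2 + Complex.I * ω) / φ lam (q : ℤ))
    (hmm : mm = ((φ lam ((q : ℤ) + 1) - θ lam (q : ℤ)) / 2 - Complex.I * ω) / φ lam (q : ℤ))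
    (fp0 fp1 : ℂ)
    (hfp0 : fp0 = Θp lam 0 + mp * Φp lam 0)
    (hfp1 : fp1 = Θp lam 1 + mp * Φp lam 1)
    (Av Jv : ℂ)
    (hAv : Av = (1 / 2) * (((a0 0 + u 0 : ℝ) : ℂ) / ((a0 0 : ℝ) : ℂ) * Φp lam 1
        + ((v 0 : ℝ) : ℂ) / ((a0 0 : ℝ) : ℂ) * Φp lam 0 + Θp lam 0) - 1)
    (hJv : Jv = -(((a0 0 + u 0 : ℝ) : ℂ) / ((a0 0 : ℝ) : ℂ) * φ lam (q : ℤ) * Θp lam 1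
        + (φ lam ((q : ℤ) + 1) - θ lam (q : ℤ)) / 2
          * (((a0 0 + u 0 : ℝ) : ℂ) / ((a0 0 : ℝ) : ℂ) * Φp lam 1 - Θp lam 0)
        + ((v 0 : ℝ) : ℂ) / ((a0 0 : ℝ) : ℂ)
          * (φ lam (q : ℤ) * Θp lam 0 + (φ lam ((q : ℤ) + 1) - θ lam (q : ℤ)) / 2 * Φp lam 0)
        + θ lam ((q : ℤ) + 1) * Φp lam 0))
    (w : ℂ)
    (hw : w = ((a0 0 + u 0 : ℝ) : ℂ) * fp1 + (((v 0 : ℝ) : ℂ) - ((a0 0 : ℝ) : ℂ) * mm) * fp0) :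
    (φ lam (q : ℤ) / ((a0 0 : ℝ) : ℂ)) * w = 2 * Complex.I * ω * (1 + Av) - Jv := by
  have ha00 : ((a0 0 : ℝ) : ℂ) ≠ 0 := by
    exact_mod_cast (ha0 0).ne'
  have haq : a0 (q : ℤ) = a0 0 := by simpa using hpa 0
  have hWq := wron_nat (fun n => (a0 n : ℂ)) (fun n => (b0 n : ℂ)) lam (θ lam) (φ lam)
    (hθ lam) (hφ lam) q
  simp only [Wron, zero_add, hθ0, hθ1, hφ0, hφ1, haq] at hWq
  have hW : θ lam (q : ℤ) * φ lam ((q : ℤ) + 1) - θ lam ((q : ℤ) + 1) * φ lam (q : ℤ) = 1 :=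
    mul_left_cancel₀ ha00 (by linear_combination hWq)
  have hI : Complex.I ^ 2 = -1 := Complex.I_sq
  have hmp' : mp * φ lam (q : ℤ) =
      (φ lam ((q : ℤ) + 1) - θ lam (q : ℤ)) / 2 + Complex.I * ω := by
    rw [hmp]; field_simp
  have hmm' : mm * φ lam (q : ℤ) =
      (φ lam ((q : ℤ) + 1) - θ lam (q : ℤ)) / 2 - Complex.I * ω := by
    rw [hmm]; field_simp
  have hkey : ((φ lam ((q : ℤ) + 1) - θ lam (q : ℤ)) / 2) ^ 2 + ω ^ 2
      = -(θ lam ((q : ℤ) + 1) * φ lam (q : ℤ)) := by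
    linear_combination hω - hW
  have hmmmp : mm * mp * φ lam (q : ℤ) = -θ lam ((q : ℤ) + 1) := by
    refine mul_right_cancel₀ hφq ?_
    linear_combination (mp * φ lam (q : ℤ)) * hmm'
      + ((φ lam ((q : ℤ) + 1) - θ lam (q : ℤ)) / 2 - Complex.I * ω) * hmp'
      + hkey - ω ^ 2 * hI
  have hAv2 : 2 * ((a0 0 : ℝ) : ℂ) * (1 + Av) = ((a0 0 + u 0 : ℝ) : ℂ) * Φp lam 1
      + ((v 0 : ℝ) : ℂ) * Φp lam 0 + ((a0 0 : ℝ) : ℂ) * Θp lam 0 := by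
    rw [hAv]; field_simp; ring
  have hJv2 : ((a0 0 : ℝ) : ℂ) * Jv = -(((a0 0 + u 0 : ℝ) : ℂ) * φ lam (q : ℤ) * Θp lam 1
      + (φ lam ((q : ℤ) + 1) - θ lam (q : ℤ)) / 2
        * (((a0 0 + u 0 : ℝ) : ℂ) * Φp lam 1 - ((a0 0 : ℝ) : ℂ) * Θp lam 0)
      + ((v 0 : ℝ) : ℂ)
        * (φ lam (q : ℤ) * Θp lam 0 + (φ lam ((q : ℤ) + 1) - θ lam (q : ℤ)) / 2 * Φp lam 0)
      + ((a0 0 : ℝ) : ℂ) * θ lam ((q : ℤ) + 1) * Φp lam 0) := by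
    rw [hJv]; field_simp
  have key : φ lam (q : ℤ) * w = ((a0 0 : ℝ) : ℂ)
      * (2 * Complex.I * ω * (1 + Av) - Jv) := by
    subst hw hfp0 hfp1
    linear_combination (-(Complex.I * ω)) * hAv2 + hJv2
      + (((a0 0 + u 0 : ℝ) : ℂ) * Φp lam 1 + ((v 0 : ℝ) : ℂ) * Φp lam 0) * hmp'
      + (-(((a0 0 : ℝ) : ℂ) * Θp lam 0)) * hmm'
      + (-(((a0 0 : ℝ) : ℂ) * Φp lam 0)) * hmmmp
  rw [div_mul_eq_mul_div, div_eq_iff ha00]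
  linear_combination key
end

section
/- Let λ ∈ ℂ with φ_q(λ) ≠ 0, let ω ∈ ℂ satisfy ω² = 1 − Δ(λ)², set m_± = (ϕ(λ) ± iω)/φ_q(λ), f⁺_j = θ⁺_j(λ) + m₊ φ⁺_j(λ) for j = 0, 1, and s = (a⁰_0 m₊ − v_0) f⁺_0 − a_0 f⁺_1. Then (φ_q(λ)/a⁰_0) · s = −2iω (1 + Ã(λ)) + J̃(λ). -/
/-- Auxiliary algebraic identity. -/
lemma shat_aux (A V PHI DEL FQ W T0 T1 P0 P1 AA : ℂ) (hFQ : FQ ≠ 0) (hA : A ≠ 0)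
    (hW : W ^ 2 = 1 - DEL ^ 2) :
    (FQ / A) * ((A * ((PHI + Complex.I * W) / FQ) - V) * (T0 + ((PHI + Complex.I * W) / FQ) * P0)
      - AA * (T1 + ((PHI + Complex.I * W) / FQ) * P1)) =
    -(2 * Complex.I * W) * (1 + ((1 / 2) * (AA / A * P1 + V / A * P0 - T0
        - (2 * PHI / FQ) * P0) - 1))
    + -(AA / A * FQ * T1 + PHI * (AA / A * P1 - T0) + V / A * (FQ * T0 + PHI * P0)
        - ((PHI ^ 2 - (1 - DEL ^ 2)) / FQ) * P0) := by
  field_simp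
  linear_combination (-(A * P0)) * hW
    + (A * W ^ 2 * P0) * Complex.I_sq

/-- The representation `ŝ = (φ_q/a⁰_0) s = −2iω(1+Ã) + J̃`. -/
theorem s_hat_representation
    (q : ℕ) (hq : 2 ≤ q) (a0 b0 : ℤ → ℝ)
    (hpa : ∀ n : ℤ, a0 (n + (q : ℤ)) = a0 n) (hpb : ∀ n : ℤ, b0 (n + (q : ℤ)) = b0 n)
    (ha0 : ∀ n : ℤ, 0 < a0 n) (hprod : ∏ j ∈ Finset.Icc (1 : ℤ) (q : ℤ), a0 j = 1)
    (θ φ : ℂ → ℤ → ℂ)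
    (hθ : ∀ lam : ℂ, JacobiSol (fun n => (a0 n : ℂ)) (fun n => (b0 n : ℂ)) lam (θ lam))
    (hθ0 : ∀ lam : ℂ, θ lam 0 = 1) (hθ1 : ∀ lam : ℂ, θ lam 1 = 0)
    (hφ : ∀ lam : ℂ, JacobiSol (fun n => (a0 n : ℂ)) (fun n => (b0 n : ℂ)) lam (φ lam))
    (hφ0 : ∀ lam : ℂ, φ lam 0 = 0) (hφ1 : ∀ lam : ℂ, φ lam 1 = 1)
    (p : ℕ) (hp : 1 ≤ p) (u v : ℤ → ℝ)
    (hsupp : ∀ n : ℤ, (n < 0 ∨ (p : ℤ) < n) → u n = 0 ∧ v n = 0)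
    (hapos : ∀ n : ℤ, 0 < a0 n + u n)
    (Θp Φp : ℂ → ℤ → ℂ)
    (hΘp : ∀ lam : ℂ, JacobiSol (fun n => ((a0 n + u n : ℝ) : ℂ))
      (fun n => ((b0 n + v n : ℝ) : ℂ)) lam (Θp lam))
    (hΘpb : ∀ lam : ℂ, ∀ n : ℤ, (p : ℤ) + 1 ≤ n → Θp lam n = θ lam n)
    (hΦp : ∀ lam : ℂ, JacobiSol (fun n => ((a0 n + u n : ℝ) : ℂ))
      (fun n => ((b0 n + v n : ℝ) : ℂ)) lam (Φp lam))
    (hΦpb : ∀ lam : ℂ, ∀ n : ℤ, (p : ℤ) + 1 ≤ n → Φp lam n = φ lam n)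
    (lam : ℂ) (hφq : φ lam (q : ℤ) ≠ 0) (ω : ℂ)
    (hω : ω ^ 2 = 1 - ((φ lam ((q : ℤ) + 1) + θ lam (q : ℤ)) / 2) ^ 2)
    (mp mm : ℂ)
    (hmp : mp = ((φ lam ((q : ℤ) + 1) - θ lam (q : ℤ)) / 2 + Complex.I * ω) / φ lam (q : ℤ))
    (hmm : mm = ((φ lam ((q : ℤ) + 1) - θ lam (q : ℤ)) / 2 - Complex.I * ω) / φ lam (q : ℤ))
    (fp0 fp1 : ℂ)
    (hfp0 : fp0 = Θp lam 0 + mp * Φp lam 0)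
    (hfp1 : fp1 = Θp lam 1 + mp * Φp lam 1)
    (Atv Jtv : ℂ)
    (hAtv : Atv = (1 / 2) * (((a0 0 + u 0 : ℝ) : ℂ) / ((a0 0 : ℝ) : ℂ) * Φp lam 1
        + ((v 0 : ℝ) : ℂ) / ((a0 0 : ℝ) : ℂ) * Φp lam 0 - Θp lam 0
        - (2 * ((φ lam ((q : ℤ) + 1) - θ lam (q : ℤ)) / 2) / φ lam (q : ℤ)) * Φp lam 0) - 1)
    (hJtv : Jtv = -(((a0 0 + u 0 : ℝ) : ℂ) / ((a0 0 : ℝ) : ℂ) * φ lam (q : ℤ) * Θp lam 1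
        + (φ lam ((q : ℤ) + 1) - θ lam (q : ℤ)) / 2
          * (((a0 0 + u 0 : ℝ) : ℂ) / ((a0 0 : ℝ) : ℂ) * Φp lam 1 - Θp lam 0)
        + ((v 0 : ℝ) : ℂ) / ((a0 0 : ℝ) : ℂ)
          * (φ lam (q : ℤ) * Θp lam 0 + (φ lam ((q : ℤ) + 1) - θ lam (q : ℤ)) / 2 * Φp lam 0)
        - ((((φ lam ((q : ℤ) + 1) - θ lam (q : ℤ)) / 2) ^ 2
            - (1 - ((φ lam ((q : ℤ) + 1) + θ lam (q : ℤ)) / 2) ^ 2)) / φ lam (q : ℤ))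
          * Φp lam 0))
    (s : ℂ)
    (hs : s = (((a0 0 : ℝ) : ℂ) * mp - ((v 0 : ℝ) : ℂ)) * fp0 - ((a0 0 + u 0 : ℝ) : ℂ) * fp1) :
    (φ lam (q : ℤ) / ((a0 0 : ℝ) : ℂ)) * s = -(2 * Complex.I * ω) * (1 + Atv) + Jtv := by
  subst hs hfp0 hfp1 hmp hAtv hJtv
  have ha : ((a0 0 : ℝ) : ℂ) ≠ 0 := by exact_mod_cast ne_of_gt (ha0 0)
  exact shat_aux ((a0 0 : ℝ) : ℂ) ((v 0 : ℝ) : ℂ)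
    ((φ lam ((q : ℤ) + 1) - θ lam (q : ℤ)) / 2)
    ((φ lam ((q : ℤ) + 1) + θ lam (q : ℤ)) / 2)
    (φ lam (q : ℤ)) ω (Θp lam 0) (Θp lam 1) (Φp lam 0) (Φp lam 1)
    ((a0 0 + u 0 : ℝ) : ℂ) hφq ha hω
end
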